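/- Suppose real numbers y₁,...,y_k and parameters R ≥ 0, f₁,...,f_k > 1 satisfy R ≤ y₁ + ... + y_{t−1} + f_t y_t for all t = 1,...,k. Then 1 − (y₁ + ... + y_k)/R < exp(−(1/f₁ + ... + 1/f_k)), provided R > 0. -/

import Mathlib

open BigOperators

lemma stmt_5_aux (k : ℕ) (y f : Fin k → ℝ) (R : ℝ)
    (hf : ∀ t, 1 < f t)
    (hineq : ∀ t : Fin k, R ≤ (∑ i ∈ Finset.univ.filter (· < t), y i) + f t * y t) :
    ∀ n, n ≤ k →
      R - ∑ i ∈ Finset.univ.filter (fun i : Fin k => i.val < n), y i ≤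
        R * ∏ i ∈ Finset.univ.filter (fun i : Fin k => i.val < n), (1 - (f i)⁻¹) := by
  intro n
  induction n with
  | zero => intro _; simp
  | succ n ih =>
    intro hn1
    have hn : n < k := hn1
    have ihn := ih (le_of_lt hn)
    set t : Fin k := ⟨n, hn⟩ with ht
    have hset : Finset.univ.filter (fun i : Fin k => i.val < n + 1) =
        insert t (Finset.univ.filter (fun i : Fin k => i.val < n)) := by
      ext i
      simp [ht, Fin.ext_iff]
      omega
    have htn : t ∉ Finset.univ.filter (fun i : Fin k => i.val < n) := by
      simp [ht]
    have hfilt : Finset.univ.filter (· < t) =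
        Finset.univ.filter (fun i : Fin k => i.val < n) := by
      ext i; simp [Fin.lt_def, ht]
    have hft : (0:ℝ) < f t := lt_trans one_pos (hf t)
    have hy : (R - ∑ i ∈ Finset.univ.filter (fun i : Fin k => i.val < n), y i) / f t ≤ y t := by
      rw [div_le_iff₀ hft, sub_le_iff_le_add]
      have := hineq t
      rw [hfilt] at this
      linarith [this]
    rw [hset, Finset.sum_insert htn, Finset.prod_insert htn]
    set S := ∑ i ∈ Finset.univ.filter (fun i : Fin k => i.val < n), y i
    set P := ∏ i ∈ Finset.univ.filter (fun i : Fin k => i.val < n), (1 - (f i)⁻¹)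
    have h1 : R - (y t + S) ≤ (R - S) * (1 - (f t)⁻¹) := by
      have : (R - S) * (1 - (f t)⁻¹) = (R - S) - (R - S) / f t := by
        field_simp
      rw [this]
      linarith [hy]
    have h2 : (R - S) * (1 - (f t)⁻¹) ≤ R * P * (1 - (f t)⁻¹) := by
      apply mul_le_mul_of_nonneg_right ihn
      have : (f t)⁻¹ < 1 := inv_lt_one_of_one_lt₀ (hf t)
      linarith
    calc R - (y t + S) ≤ (R - S) * (1 - (f t)⁻¹) := h1
      _ ≤ R * P * (1 - (f t)⁻¹) := h2
      _ = R * ((1 - (f t)⁻¹) * P) := by ring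

/-- Generalized linear programming bound: if `R ≤ y₁ + ... + y_{t−1} + f_t y_t`
for all `t = 1, ..., k` with `R > 0` and each `f_t > 1`, then
`1 − (y₁ + ... + y_k)/R < exp(−(1/f₁ + ... + 1/f_k))`. -/
theorem stmt_5 (k : ℕ) (hk : 0 < k) (y f : Fin k → ℝ) (R : ℝ) (hR : 0 < R)
    (hf : ∀ t, 1 < f t)
    (hineq : ∀ t : Fin k, R ≤ (∑ i ∈ Finset.univ.filter (· < t), y i) + f t * y t) :
    1 - (∑ i, y i) / R < Real.exp (-∑ i, (f i)⁻¹) := by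
  have key := stmt_5_aux k y f R hf hineq k le_rfl
  have hall : Finset.univ.filter (fun i : Fin k => i.val < k) = Finset.univ := by
    ext i; simp [i.isLt]
  rw [hall] at key
  have h1 : 1 - (∑ i, y i) / R ≤ ∏ i, (1 - (f i)⁻¹) := by
    rw [sub_div' (ne_of_gt hR), div_le_iff₀ hR, one_mul]
    calc R - ∑ i, y i ≤ R * ∏ i, (1 - (f i)⁻¹) := key
      _ = (∏ i, (1 - (f i)⁻¹)) * R := by ring
  have h2 : ∏ i, (1 - (f i)⁻¹) < ∏ i : Fin k, Real.exp (-(f i)⁻¹) := by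
    apply Finset.prod_lt_prod_of_nonempty
    · intro i _
      have : (f i)⁻¹ < 1 := inv_lt_one_of_one_lt₀ (hf i)
      linarith
    · intro i _
      have hne : -(f i)⁻¹ ≠ 0 := by
        have : 0 < (f i)⁻¹ := inv_pos.mpr (lt_trans one_pos (hf i))
        linarith
      have := Real.add_one_lt_exp hne
      linarith
    · exact Finset.univ_nonempty_iff.mpr (Fin.pos_iff_nonempty.mp hk)
  have h3 : ∏ i : Fin k, Real.exp (-(f i)⁻¹) = Real.exp (-∑ i, (f i)⁻¹) := by
    rw [← Real.exp_sum, ← Finset.sum_neg_distrib]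
  linarith
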